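/- arXiv:2010.08163 — 12 statements merged into one kernel-verified Lean document; each statement's English description precedes it below -/
import Mathlib

section
/- Assume 0 < π0 < 1 and π1, π2, π3 > 0. Then the steady-state length L_ss is positive and satisfies the steady-state relation J_ss·(1 − 2·L_ss) − π0 − π1·J_ss·L_ss = 0, where J_ss = 1/(1 + 2π2·L_ss + 2π3·L_ss²). -/
noncomputable section

/-- Steady-state length `L_ss`. -/
def Lss (π0 π1 π2 π3 : ℝ) : ℝ :=
  ((1 + π0 * π2 + π1 / 2) / (2 * π0 * π3)) *
    (Real.sqrt (1 + 2 * (1 - π0) * π0 * π3 / (1 + π0 * π2 + π1 / 2) ^ 2) - 1)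

/-- Steady-state flux `J_ss`. -/
def Jss (π0 π1 π2 π3 : ℝ) : ℝ :=
  1 / (1 + 2 * π2 * Lss π0 π1 π2 π3 + 2 * π3 * (Lss π0 π1 π2 π3) ^ 2)

/-- For `0 < π0 < 1` and `π1, π2, π3 > 0`, the steady-state length is
positive and satisfies the steady-state relation
`J_ss·(1 − 2·L_ss) − π0 − π1·J_ss·L_ss = 0`. -/
theorem steady_state_relation (π0 π1 π2 π3 : ℝ)
    (hπ0 : 0 < π0) (hπ0' : π0 < 1) (hπ1 : 0 < π1) (hπ2 : 0 < π2) (hπ3 : 0 < π3) :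
    0 < Lss π0 π1 π2 π3 ∧
    Jss π0 π1 π2 π3 * (1 - 2 * Lss π0 π1 π2 π3) - π0 -
      π1 * Jss π0 π1 π2 π3 * Lss π0 π1 π2 π3 = 0 := by
  have ha : 0 < 1 + π0 * π2 + π1 / 2 := by positivity
  set a : ℝ := 1 + π0 * π2 + π1 / 2 with ha_def
  have ht : 0 < 2 * (1 - π0) * π0 * π3 / a ^ 2 := by
    have : 0 < 1 - π0 := by linarith
    positivity
  set t : ℝ := 2 * (1 - π0) * π0 * π3 / a ^ 2 with ht_def
  set s : ℝ := Real.sqrt (1 + t) with hs_def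
  have hs2 : s ^ 2 = 1 + t := Real.sq_sqrt (by linarith)
  have hs1 : 1 < s := by nlinarith [Real.sqrt_nonneg (1 + t), hs2, ht]
  have hts : a ^ 2 * t = 2 * (1 - π0) * π0 * π3 := by
    rw [ht_def]; field_simp
  have hLdef : Lss π0 π1 π2 π3 = (a / (2 * π0 * π3)) * (s - 1) := rfl
  set L : ℝ := Lss π0 π1 π2 π3 with hL_def
  have hLpos : 0 < L := by
    rw [hLdef]
    exact mul_pos (div_pos ha (by positivity)) (by linarith)
  refine ⟨hLpos, ?_⟩
  have key : a ^ 2 * (s - 1) ^ 2 + 2 * a ^ 2 * (s - 1) = 2 * (1 - π0) * π0 * π3 := by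
    linear_combination a ^ 2 * hs2 + hts
  have h2 : (2 * π0 * π3) ≠ 0 := by positivity
  have hquad : 2 * π0 * π3 * L ^ 2 + 2 * a * L + π0 - 1 = 0 := by
    rw [hLdef]
    field_simp
    linear_combination key
  have hD : 0 < 1 + 2 * π2 * L + 2 * π3 * L ^ 2 := by positivity
  have hJ : Jss π0 π1 π2 π3 = 1 / (1 + 2 * π2 * L + 2 * π3 * L ^ 2) := rfl
  rw [hJ]
  field_simp
  linear_combination -hquad
end
end

section
/- Assume 0 < π0 < 1 and π1, π2, π3 > 0. If (L1, L2) ∈ Ω satisfies F1(L1,L2) = 0 and F2(L1,L2) = 0, then L1 = L2 = L_ss. In other words, (L_ss, L_ss) is the unique fixed point of the vector field F in Ω. -/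
noncomputable section

/-- The flux `J(L1, L2)`. -/
def J (π2 π3 L1 L2 : ℝ) : ℝ :=
  1 / (1 + π2 * (L1 + L2) + π3 * (L1 ^ 2 + L2 ^ 2))

/-- The first component of the vector field. -/
def F1 (π0 π1 π2 π3 L1 L2 : ℝ) : ℝ :=
  J π2 π3 L1 L2 * (1 - L1 - L2) - π0 - π1 * J π2 π3 L1 L2 * L1

/-- The second component of the vector field. -/
def F2 (π0 π1 π2 π3 L1 L2 : ℝ) : ℝ :=
  J π2 π3 L1 L2 * (1 - L1 - L2) - π0 - π1 * J π2 π3 L1 L2 * L2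

/-- The domain `Ω`. -/
def Omega : Set (ℝ × ℝ) := {p | 0 ≤ p.1 ∧ 0 ≤ p.2 ∧ p.1 + p.2 ≤ 1}

/-- `(L_ss, L_ss)` is the unique fixed point of the vector field in `Ω`. -/
theorem unique_fixed_point (π0 π1 π2 π3 : ℝ)
    (hπ0 : 0 < π0) (hπ0' : π0 < 1) (hπ1 : 0 < π1) (hπ2 : 0 < π2) (hπ3 : 0 < π3)
    (L1 L2 : ℝ) (hΩ : (L1, L2) ∈ Omega)
    (hF1 : F1 π0 π1 π2 π3 L1 L2 = 0) (hF2 : F2 π0 π1 π2 π3 L1 L2 = 0) :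
    L1 = Lss π0 π1 π2 π3 ∧ L2 = Lss π0 π1 π2 π3 := by
  obtain ⟨h1, h2, h3⟩ := hΩ
  simp only at h1 h2 h3
  have h1π0 : (0:ℝ) < 1 - π0 := by linarith
  have hD : (0:ℝ) < 1 + π2 * (L1 + L2) + π3 * (L1 ^ 2 + L2 ^ 2) := by positivity
  have hJ : 0 < J π2 π3 L1 L2 := by unfold J; positivity
  have heq : L1 = L2 := by
    have h12 : π1 * J π2 π3 L1 L2 * L1 = π1 * J π2 π3 L1 L2 * L2 := by
      unfold F1 at hF1; unfold F2 at hF2; linarith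
    exact mul_left_cancel₀ (by positivity) h12
  subst heq
  have hD' : (1 + π2 * (L1 + L1) + π3 * (L1 ^ 2 + L1 ^ 2)) ≠ 0 := ne_of_gt hD
  have hq : 2*π0*π3*L1^2 + (2 + π1 + 2*π0*π2)*L1 - (1 - π0) = 0 := by
    unfold F1 J at hF1
    field_simp at hF1
    linarith
  set a : ℝ := 1 + π0 * π2 + π1 / 2 with ha_def
  have ha : 0 < a := by positivity
  set s : ℝ := Real.sqrt (1 + 2 * (1 - π0) * π0 * π3 / a ^ 2) with hs_def
  have hcnn : (0:ℝ) ≤ 2 * (1 - π0) * π0 * π3 / a ^ 2 := by positivity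
  have hinner : (0:ℝ) ≤ 1 + 2 * (1 - π0) * π0 * π3 / a ^ 2 := by linarith
  have hs2 : s ^ 2 = 1 + 2 * (1 - π0) * π0 * π3 / a ^ 2 := Real.sq_sqrt hinner
  have hsnn : 0 ≤ s := Real.sqrt_nonneg _
  have hs1 : 1 ≤ s := by nlinarith [hs2, hsnn]
  set L : ℝ := Lss π0 π1 π2 π3 with hL_def
  have hLss_def : L = (a / (2 * π0 * π3)) * (s - 1) := by rw [hL_def, Lss]
  have hLnn : 0 ≤ L := by
    rw [hLss_def]
    apply mul_nonneg (by positivity)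
    linarith
  have hs2' : s ^ 2 * a ^ 2 = a ^ 2 + 2 * (1 - π0) * π0 * π3 := by
    rw [hs2]; field_simp
  have hL2 : 2 * π0 * π3 * L = a * (s - 1) := by
    rw [hLss_def]; field_simp
  have key : 2*π0*π3*(2*π0*π3*L^2 + (2 + π1 + 2*π0*π2)*L - (1 - π0)) = 0 := by
    have h2a : (2:ℝ) + π1 + 2*π0*π2 = 2 * a := by rw [ha_def]; ring
    rw [h2a]
    linear_combination (2*π0*π3*L + a*(s-1) + 2*a) * hL2 + hs2'
  have hqss : 2*π0*π3*L^2 + (2 + π1 + 2*π0*π2)*L - (1 - π0) = 0 := by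
    have h2π : (2*π0*π3 : ℝ) ≠ 0 := by positivity
    rcases mul_eq_zero.mp key with h | h
    · exact absurd h h2π
    · exact h
  have hfac : (L1 - L) * (2*π0*π3*(L1 + L) + (2 + π1 + 2*π0*π2)) = 0 := by
    linear_combination hq - hqss
  have hpos : 0 < 2*π0*π3*(L1 + L) + (2 + π1 + 2*π0*π2) := by
    have : 0 ≤ 2*π0*π3*(L1 + L) := by positivity
    nlinarith
  rcases mul_eq_zero.mp hfac with h | h
  · have : L1 = L := by linarith [sub_eq_zero.mp h]
    exact ⟨this, this⟩
  · exact absurd h (ne_of_gt hpos)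
end
end

section
/- Assume π1 > 0 and π2, π3 > 0. The active disassembly model is not a gradient system: there is no twice continuously differentiable function E defined on the interior of Ω such that ∂E/∂L1 = F1 and ∂E/∂L2 = F2 throughout the interior of Ω. -/
noncomputable section

/-- The interior of the domain `Ω`. -/
def intOmega : Set (ℝ × ℝ) := {p | 0 < p.1 ∧ 0 < p.2 ∧ p.1 + p.2 < 1}

lemma hasDerivAt_F1_y (π0 π1 π2 π3 : ℝ) (hπ2 : 0 < π2) (hπ3 : 0 < π3) :
    HasDerivAt (fun y => F1 π0 π1 π2 π3 (1/2) y)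
      ((-(π2 + π3 * (1/2)) * (1/4) - (1 + π2 * (1/2 + 1/4) + π3 * ((1/2)^2 + (1/4)^2))
        - π1 * (-(π2 + π3 * (1/2))) * (1/2))
        / (1 + π2 * (1/2 + 1/4) + π3 * ((1/2)^2 + (1/4)^2))^2) (1/4) := by
  have hD0 : (0:ℝ) < 1 + π2 * (1/2 + 1/4) + π3 * ((1/2)^2 + (1/4)^2) := by positivity
  have hD0ne : (1 + π2 * (1/2 + 1/4) + π3 * ((1/2)^2 + (1/4)^2)) ≠ 0 := ne_of_gt hD0
  have hDen : HasDerivAt (fun y : ℝ => 1 + π2 * (1/2 + y) + π3 * ((1/2)^2 + y ^ 2))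
      (π2 * 1 + π3 * ((2:ℕ) * (1/4:ℝ) ^ (2-1))) (1/4) := by
    have := ((((hasDerivAt_id (1/4:ℝ)).const_add (1/2)).const_mul π2).const_add 1).add
      (((hasDerivAt_pow 2 (1/4:ℝ)).const_add ((1/2)^2)).const_mul π3)
    simpa [Pi.add_def] using this
  have hJ := (hasDerivAt_const (1/4:ℝ) 1).div hDen hD0ne
  have hlin : HasDerivAt (fun y : ℝ => 1 - 1/2 - y) (-(1:ℝ)) (1/4) :=
    HasDerivAt.const_sub (1 - 1/2) (hasDerivAt_id (1/4:ℝ))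
  have h := ((hJ.mul hlin).sub_const π0).sub ((hJ.const_mul π1).mul_const (1/2))
  have hfun : (fun y => F1 π0 π1 π2 π3 (1/2) y)
      = fun y : ℝ => 1 / (1 + π2 * (1/2 + y) + π3 * ((1/2)^2 + y ^ 2)) * (1 - 1/2 - y) - π0
        - π1 * (1 / (1 + π2 * (1/2 + y) + π3 * ((1/2)^2 + y ^ 2))) * (1/2) := by
    funext y; simp [F1, J]
  rw [hfun]
  refine h.congr_deriv ?_
  simp only [Pi.div_apply]
  norm_num
  field_simp
  ring

lemma hasDerivAt_F2_x (π0 π1 π2 π3 : ℝ) (hπ2 : 0 < π2) (hπ3 : 0 < π3) :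
    HasDerivAt (fun x => F2 π0 π1 π2 π3 x (1/4))
      ((-(π2 + π3 * 1) * (1/4) - (1 + π2 * (1/2 + 1/4) + π3 * ((1/2)^2 + (1/4)^2))
        - π1 * (-(π2 + π3 * 1)) * (1/4))
        / (1 + π2 * (1/2 + 1/4) + π3 * ((1/2)^2 + (1/4)^2))^2) (1/2) := by
  have hD0 : (0:ℝ) < 1 + π2 * (1/2 + 1/4) + π3 * ((1/2)^2 + (1/4)^2) := by positivity
  have hD0ne : (1 + π2 * (1/2 + 1/4) + π3 * ((1/2)^2 + (1/4)^2)) ≠ 0 := ne_of_gt hD0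
  have hDen : HasDerivAt (fun x : ℝ => 1 + π2 * (x + 1/4) + π3 * (x ^ 2 + (1/4)^2))
      (π2 * 1 + π3 * ((2:ℕ) * (1/2:ℝ) ^ (2-1))) (1/2) := by
    have := ((((hasDerivAt_id (1/2:ℝ)).add_const (1/4)).const_mul π2).const_add 1).add
      (((hasDerivAt_pow 2 (1/2:ℝ)).add_const ((1/4)^2)).const_mul π3)
    simpa [Pi.add_def] using this
  have hJ := (hasDerivAt_const (1/2:ℝ) 1).div hDen (by
    convert hD0ne using 2)
  have hlin : HasDerivAt (fun x : ℝ => 1 - x - 1/4) (-1) (1/2) := by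
    simpa using ((hasDerivAt_id (1/2:ℝ)).const_sub 1).sub_const (1/4)
  have h := ((hJ.mul hlin).sub_const π0).sub ((hJ.const_mul π1).mul_const (1/4))
  have hfun : (fun x => F2 π0 π1 π2 π3 x (1/4))
      = fun x : ℝ => 1 / (1 + π2 * (x + 1/4) + π3 * (x ^ 2 + (1/4)^2)) * (1 - x - 1/4) - π0
        - π1 * (1 / (1 + π2 * (x + 1/4) + π3 * (x ^ 2 + (1/4)^2))) * (1/4) := by
    funext x; simp [F2, J]
  rw [hfun]
  refine h.congr_deriv ?_
  simp only [Pi.div_apply]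
  norm_num
  field_simp
  ring

/-- the active disassembly model is not a gradient system: there is no
twice continuously differentiable `E` on the interior of `Ω` whose partial derivatives
agree with `F1` and `F2` there. -/
theorem not_gradient_system (π0 π1 π2 π3 : ℝ)
    (hπ1 : 0 < π1) (hπ2 : 0 < π2) (hπ3 : 0 < π3) :
    ¬ ∃ E : ℝ × ℝ → ℝ,
      ContDiffOn ℝ 2 E intOmega ∧
      ∀ p ∈ intOmega,
        deriv (fun x => E (x, p.2)) p.1 = F1 π0 π1 π2 π3 p.1 p.2 ∧
        deriv (fun y => E (p.1, y)) p.2 = F2 π0 π1 π2 π3 p.1 p.2 := by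
  rintro ⟨E, hE, hgrad⟩
  have hopen : IsOpen intOmega := by
    have h1 : IsOpen {p : ℝ × ℝ | 0 < p.1} := isOpen_lt continuous_const continuous_fst
    have h2 : IsOpen {p : ℝ × ℝ | 0 < p.2} := isOpen_lt continuous_const continuous_snd
    have h3 : IsOpen {p : ℝ × ℝ | p.1 + p.2 < 1} :=
      isOpen_lt (continuous_fst.add continuous_snd) continuous_const
    exact h1.inter (h2.inter h3)
  have hp0 : ((1/2 : ℝ), (1/4 : ℝ)) ∈ intOmega := by norm_num [intOmega]
  have hcd : ContDiffAt ℝ 2 E ((1/2 : ℝ), (1/4 : ℝ)) := hE.contDiffAt (hopen.mem_nhds hp0)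
  have hsymm : IsSymmSndFDerivAt ℝ E ((1/2 : ℝ), (1/4 : ℝ)) := hcd.isSymmSndFDerivAt (by simp)
  have hf' : DifferentiableAt ℝ (fderiv ℝ E) ((1/2 : ℝ), (1/4 : ℝ)) :=
    (hcd.fderiv_right (m := 1) (le_refl 2)).differentiableAt (by norm_num)
  have hdiff : ∀ p ∈ intOmega, DifferentiableAt ℝ E p := fun p hp =>
    (hE.contDiffAt (hopen.mem_nhds hp)).differentiableAt (by norm_num)
  -- partial derivatives equal F1, F2 on intOmega
  have key1 : ∀ p ∈ intOmega, fderiv ℝ E p ((1:ℝ), (0:ℝ)) = F1 π0 π1 π2 π3 p.1 p.2 := by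
    intro p hp
    have h1 : HasDerivAt (fun x => E (x, p.2)) (fderiv ℝ E p ((1:ℝ), (0:ℝ))) p.1 := by
      have := (hdiff p hp).hasFDerivAt.comp_hasDerivAt p.1
        ((hasDerivAt_id p.1).prodMk (hasDerivAt_const p.1 p.2))
      simpa [Function.comp_def] using this
    rw [← h1.deriv]; exact (hgrad p hp).1
  have key2 : ∀ p ∈ intOmega, fderiv ℝ E p ((0:ℝ), (1:ℝ)) = F2 π0 π1 π2 π3 p.1 p.2 := by
    intro p hp
    have h1 : HasDerivAt (fun y => E (p.1, y)) (fderiv ℝ E p ((0:ℝ), (1:ℝ))) p.2 := by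
      have := (hdiff p hp).hasFDerivAt.comp_hasDerivAt p.2
        ((hasDerivAt_const p.2 p.1).prodMk (hasDerivAt_id p.2))
      simpa [Function.comp_def] using this
    rw [← h1.deriv]; exact (hgrad p hp).2
  -- second partials via fderiv of fderiv
  have hu : HasFDerivAt (fun q => fderiv ℝ E q ((1:ℝ), (0:ℝ)))
      ((ContinuousLinearMap.apply ℝ ℝ ((1:ℝ), (0:ℝ))).comp
        (fderiv ℝ (fderiv ℝ E) ((1/2 : ℝ), (1/4 : ℝ)))) ((1/2 : ℝ), (1/4 : ℝ)) :=
    (ContinuousLinearMap.apply ℝ ℝ ((1:ℝ), (0:ℝ))).hasFDerivAt.comp _ hf'.hasFDerivAt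
  have hv : HasFDerivAt (fun q => fderiv ℝ E q ((0:ℝ), (1:ℝ)))
      ((ContinuousLinearMap.apply ℝ ℝ ((0:ℝ), (1:ℝ))).comp
        (fderiv ℝ (fderiv ℝ E) ((1/2 : ℝ), (1/4 : ℝ)))) ((1/2 : ℝ), (1/4 : ℝ)) :=
    (ContinuousLinearMap.apply ℝ ℝ ((0:ℝ), (1:ℝ))).hasFDerivAt.comp _ hf'.hasFDerivAt
  have hyu : HasDerivAt (fun y => fderiv ℝ E ((1/2 : ℝ), y) ((1:ℝ), (0:ℝ)))
      (fderiv ℝ (fderiv ℝ E) ((1/2 : ℝ), (1/4 : ℝ)) ((0:ℝ), (1:ℝ)) ((1:ℝ), (0:ℝ))) (1/4) := by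
    have := hu.comp_hasDerivAt (1/4 : ℝ)
      ((hasDerivAt_const (1/4:ℝ) (1/2:ℝ)).prodMk (hasDerivAt_id (1/4:ℝ)))
    simpa [Function.comp_def] using this
  have hxv : HasDerivAt (fun x => fderiv ℝ E (x, (1/4 : ℝ)) ((0:ℝ), (1:ℝ)))
      (fderiv ℝ (fderiv ℝ E) ((1/2 : ℝ), (1/4 : ℝ)) ((1:ℝ), (0:ℝ)) ((0:ℝ), (1:ℝ))) (1/2) := by
    have := hv.comp_hasDerivAt (1/2 : ℝ)
      ((hasDerivAt_id (1/2:ℝ)).prodMk (hasDerivAt_const (1/2:ℝ) (1/4:ℝ)))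
    simpa [Function.comp_def] using this
  -- identify with derivatives of F1, F2
  have hmemy : ∀ᶠ y in nhds (1/4:ℝ), ((1/2:ℝ), y) ∈ intOmega := by
    have hc : ContinuousAt (fun y : ℝ => ((1/2:ℝ), y)) (1/4) :=
      (continuous_const.prodMk continuous_id).continuousAt
    exact hc (hopen.mem_nhds hp0)
  have hmemx : ∀ᶠ x in nhds (1/2:ℝ), (x, (1/4:ℝ)) ∈ intOmega := by
    have hc : ContinuousAt (fun x : ℝ => (x, (1/4:ℝ))) (1/2) :=
      (continuous_id.prodMk continuous_const).continuousAt
    exact hc (hopen.mem_nhds hp0)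
  have heqy : (fun y => fderiv ℝ E ((1/2 : ℝ), y) ((1:ℝ), (0:ℝ)))
      =ᶠ[nhds (1/4:ℝ)] (fun y => F1 π0 π1 π2 π3 (1/2) y) :=
    hmemy.mono fun y hy => key1 _ hy
  have heqx : (fun x => fderiv ℝ E (x, (1/4 : ℝ)) ((0:ℝ), (1:ℝ)))
      =ᶠ[nhds (1/2:ℝ)] (fun x => F2 π0 π1 π2 π3 x (1/4)) :=
    hmemx.mono fun x hx => key2 _ hx
  have e1eq : fderiv ℝ (fderiv ℝ E) ((1/2 : ℝ), (1/4 : ℝ)) ((0:ℝ), (1:ℝ)) ((1:ℝ), (0:ℝ))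
      = deriv (fun y => F1 π0 π1 π2 π3 (1/2) y) (1/4) := by
    rw [← hyu.deriv]; exact heqy.deriv_eq
  have e2eq : fderiv ℝ (fderiv ℝ E) ((1/2 : ℝ), (1/4 : ℝ)) ((1:ℝ), (0:ℝ)) ((0:ℝ), (1:ℝ))
      = deriv (fun x => F2 π0 π1 π2 π3 x (1/4)) (1/2) := by
    rw [← hxv.deriv]; exact heqx.deriv_eq
  have hmix : deriv (fun y => F1 π0 π1 π2 π3 (1/2) y) (1/4)
      = deriv (fun x => F2 π0 π1 π2 π3 x (1/4)) (1/2) := by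
    rw [← e1eq, ← e2eq]; exact hsymm.eq _ _
  rw [(hasDerivAt_F1_y π0 π1 π2 π3 hπ2 hπ3).deriv,
    (hasDerivAt_F2_x π0 π1 π2 π3 hπ2 hπ3).deriv] at hmix
  have hD0 : (0:ℝ) < 1 + π2 * (1/2 + 1/4) + π3 * ((1/2)^2 + (1/4)^2) := by positivity
  have hD0ne : (1 + π2 * (1/2 + 1/4) + π3 * ((1/2)^2 + (1/4)^2)) ≠ 0 := ne_of_gt hD0
  rw [div_eq_div_iff (by positivity) (by positivity)] at hmix
  have hcanc := mul_right_cancel₀ (pow_ne_zero 2 hD0ne) hmix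
  nlinarith [mul_pos hπ1 hπ2, mul_pos hπ1 hπ3]
end
end

section
/- Assume π1, π2, π3 > 0. Let L = (L1, L2) : ℝ → ℝ² be a differentiable solution of the system L1' = F1(L1,L2), L2' = F2(L1,L2) with L(t) ∈ Ω for all t ≥ 0. Then for all t ≥ 0, (1/2)·d/dt[(L1(t) − L2(t))²] = −π1·J(L1(t),L2(t))·(L1(t) − L2(t))². -/
noncomputable section

/-- along any solution of the system staying in `Ω` for `t ≥ 0`,
`(1/2)·d/dt[(L1 − L2)²] = −π1·J(L1,L2)·(L1 − L2)²`. -/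
theorem diff_decay (π0 π1 π2 π3 : ℝ)
    (hπ1 : 0 < π1) (hπ2 : 0 < π2) (hπ3 : 0 < π3)
    (L1 L2 : ℝ → ℝ)
    (hd1 : ∀ t : ℝ, HasDerivAt L1 (F1 π0 π1 π2 π3 (L1 t) (L2 t)) t)
    (hd2 : ∀ t : ℝ, HasDerivAt L2 (F2 π0 π1 π2 π3 (L1 t) (L2 t)) t)
    (hΩ : ∀ t : ℝ, 0 ≤ t → (L1 t, L2 t) ∈ Omega) :
    ∀ t : ℝ, 0 ≤ t →
      (1 / 2) * deriv (fun s => (L1 s - L2 s) ^ 2) t =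
        -π1 * J π2 π3 (L1 t) (L2 t) * (L1 t - L2 t) ^ 2 := by
  intro t ht
  have h : HasDerivAt (fun s => (L1 s - L2 s) ^ 2)
      (2 * (L1 t - L2 t) ^ (2-1) * (F1 π0 π1 π2 π3 (L1 t) (L2 t) - F2 π0 π1 π2 π3 (L1 t) (L2 t))) t :=
    by simpa using HasDerivAt.fun_pow ((hd1 t).sub (hd2 t)) 2
  rw [h.deriv]
  simp only [F1, F2]
  ring
end
end

section
/- Assume 0 < π0 < 1 and π1, π2, π3 > 0. Let L = (L1, L2) : ℝ → ℝ² be a differentiable solution of the system L1' = F1(L1,L2), L2' = F2(L1,L2), and set ΔL_i(t) = L_i(t) − L_ss for i = 1, 2. Then for all t, (1/2)·d/dt[(ΔL1(t) + ΔL2(t))²] = 2·(J(L1(t),L2(t)) − J_ss)·(1 − 2·L_ss − π1·L_ss)·(ΔL1(t) + ΔL2(t)) − (2 + π1)·J(L1(t),L2(t))·(ΔL1(t) + ΔL2(t))². -/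
noncomputable section

lemma Jss_key (π0 π1 π2 π3 : ℝ)
    (hπ0 : 0 < π0) (hπ0' : π0 < 1) (hπ1 : 0 < π1) (hπ2 : 0 < π2) (hπ3 : 0 < π3) :
    Jss π0 π1 π2 π3 * (1 - 2 * Lss π0 π1 π2 π3 - π1 * Lss π0 π1 π2 π3) = π0 := by
  set a : ℝ := 1 + π0 * π2 + π1 / 2 with ha
  have ha0 : 0 < a := by positivity
  have hb0 : (0:ℝ) < 2 * π0 * π3 := by positivity
  have h1π0 : 0 < 1 - π0 := by linarith
  have harg : (0:ℝ) ≤ 1 + 2 * (1 - π0) * π0 * π3 / a ^ 2 := by positivity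
  have hr2 : Real.sqrt (1 + 2 * (1 - π0) * π0 * π3 / a ^ 2) ^ 2
      = 1 + 2 * (1 - π0) * π0 * π3 / a ^ 2 := Real.sq_sqrt harg
  have hr1 : 1 ≤ Real.sqrt (1 + 2 * (1 - π0) * π0 * π3 / a ^ 2) := by
    have h1 : (0:ℝ) ≤ 2 * (1 - π0) * π0 * π3 / a ^ 2 := by positivity
    nlinarith [Real.sqrt_nonneg (1 + 2 * (1 - π0) * π0 * π3 / a ^ 2), hr2]
  set r := Real.sqrt (1 + 2 * (1 - π0) * π0 * π3 / a ^ 2) with hrr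
  have hL : Lss π0 π1 π2 π3 = (a / (2 * π0 * π3)) * (r - 1) := by
    rw [Lss, ← ha, ← hrr]
  have hL0 : 0 ≤ Lss π0 π1 π2 π3 := by
    rw [hL]; have : 0 ≤ r - 1 := by linarith
    positivity
  set L := Lss π0 π1 π2 π3 with hLd
  -- quadratic identity
  have hq : 2 * π0 * π3 * L ^ 2 + 2 * a * L - (1 - π0) = 0 := by
    rw [hL]
    have ha2 : a ^ 2 ≠ 0 := by positivity
    have hb : (2 * π0 * π3) ≠ 0 := ne_of_gt hb0
    have hr2' : a ^ 2 * r ^ 2 = a ^ 2 + 2 * (1 - π0) * π0 * π3 := by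
      rw [hr2]; field_simp
    have hb : (2 * π0 * π3) ≠ 0 := ne_of_gt hb0
    field_simp
    linear_combination hr2'
  have hD : (0:ℝ) < 1 + 2 * π2 * L + 2 * π3 * L ^ 2 := by positivity
  have hJss : Jss π0 π1 π2 π3 = 1 / (1 + 2 * π2 * L + 2 * π3 * L ^ 2) := rfl
  rw [hJss]
  rw [div_mul_eq_mul_div, div_eq_iff (ne_of_gt hD)]
  have h2a : 2 * a = 2 + 2 * π0 * π2 + π1 := by rw [ha]; ring
  nlinarith [hq]

/-- along any solution,
`(1/2)·d/dt[(ΔL1 + ΔL2)²]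
  = 2·(J − J_ss)·(1 − 2·L_ss − π1·L_ss)·(ΔL1 + ΔL2) − (2 + π1)·J·(ΔL1 + ΔL2)²`. -/
theorem sum_deviation_evolution (π0 π1 π2 π3 : ℝ)
    (hπ0 : 0 < π0) (hπ0' : π0 < 1) (hπ1 : 0 < π1) (hπ2 : 0 < π2) (hπ3 : 0 < π3)
    (L1 L2 : ℝ → ℝ)
    (hd1 : ∀ t : ℝ, HasDerivAt L1 (F1 π0 π1 π2 π3 (L1 t) (L2 t)) t)
    (hd2 : ∀ t : ℝ, HasDerivAt L2 (F2 π0 π1 π2 π3 (L1 t) (L2 t)) t) :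
    ∀ t : ℝ,
      (1 / 2) * deriv (fun s =>
          ((L1 s - Lss π0 π1 π2 π3) + (L2 s - Lss π0 π1 π2 π3)) ^ 2) t =
        2 * (J π2 π3 (L1 t) (L2 t) - Jss π0 π1 π2 π3) *
            (1 - 2 * Lss π0 π1 π2 π3 - π1 * Lss π0 π1 π2 π3) *
            ((L1 t - Lss π0 π1 π2 π3) + (L2 t - Lss π0 π1 π2 π3)) -
          (2 + π1) * J π2 π3 (L1 t) (L2 t) *
            ((L1 t - Lss π0 π1 π2 π3) + (L2 t - Lss π0 π1 π2 π3)) ^ 2 := by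
  intro t
  set c := Lss π0 π1 π2 π3 with hc
  have hS : HasDerivAt (fun s => ((L1 s - c) + (L2 s - c)) ^ 2)
      (2 * ((L1 t - c) + (L2 t - c)) ^ 1 *
        (F1 π0 π1 π2 π3 (L1 t) (L2 t) + F2 π0 π1 π2 π3 (L1 t) (L2 t))) t := by
    have := (((hd1 t).sub_const c).add ((hd2 t).sub_const c)).pow 2
    exact this.congr_deriv (by norm_num)
  rw [hS.deriv]
  have hkey := Jss_key π0 π1 π2 π3 hπ0 hπ0' hπ1 hπ2 hπ3
  rw [← hc] at hkey
  unfold F1 F2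
  linear_combination (2 * ((L1 t - c) + (L2 t - c))) * hkey
end
end

section
/- Assume 0 < π0 < 1 and π1, π2, π3 > 0. Then 1 − 2·L_ss − π1·L_ss = π0/J_ss, where J_ss = 1/(1 + 2π2·L_ss + 2π3·L_ss²). -/
noncomputable section

/-- `1 − 2·L_ss − π1·L_ss = π0/J_ss`. -/
theorem steady_state_identity (π0 π1 π2 π3 : ℝ)
    (hπ0 : 0 < π0) (hπ0' : π0 < 1) (hπ1 : 0 < π1) (hπ2 : 0 < π2) (hπ3 : 0 < π3) :
    1 - 2 * Lss π0 π1 π2 π3 - π1 * Lss π0 π1 π2 π3 = π0 / Jss π0 π1 π2 π3 := by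
  set a : ℝ := 1 + π0 * π2 + π1 / 2 with ha_def
  have ha : 0 < a := by positivity
  set s : ℝ := Real.sqrt (a ^ 2 + 2 * (1 - π0) * π0 * π3) with hs_def
  have hargnn : 0 ≤ a ^ 2 + 2 * (1 - π0) * π0 * π3 := by
    have h1 : 0 ≤ 2 * (1 - π0) * π0 * π3 := by
      apply mul_nonneg
      apply mul_nonneg
      · linarith
      · exact hπ0.le
      · exact hπ3.le
    nlinarith [sq_nonneg a]
  have hs2 : s ^ 2 = a ^ 2 + 2 * (1 - π0) * π0 * π3 := Real.sq_sqrt hargnn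
  have hsqrt : Real.sqrt (1 + 2 * (1 - π0) * π0 * π3 / a ^ 2) = s / a := by
    rw [hs_def,
      show (1 : ℝ) + 2 * (1 - π0) * π0 * π3 / a ^ 2
        = (a ^ 2 + 2 * (1 - π0) * π0 * π3) / a ^ 2 by field_simp,
      Real.sqrt_div hargnn, Real.sqrt_sq ha.le]
  have hL : Lss π0 π1 π2 π3 = (s - a) / (2 * π0 * π3) := by
    rw [Lss, ← ha_def, hsqrt]
    field_simp
  have hsnn : 0 ≤ s := Real.sqrt_nonneg _
  rw [Jss, hL]
  have h0 : (2 * π0 * π3) ≠ 0 := by positivity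
  field_simp
  linear_combination (-1) * hs2
end
end

section
/- Assume 0 < π0 < 1 and π1, π2, π3 > 0. Then 0 < L_ss < 1/2. -/
noncomputable section

/-- `0 < L_ss < 1/2`. -/
theorem Lss_bounds (π0 π1 π2 π3 : ℝ)
    (hπ0 : 0 < π0) (hπ0' : π0 < 1) (hπ1 : 0 < π1) (hπ2 : 0 < π2) (hπ3 : 0 < π3) :
    0 < Lss π0 π1 π2 π3 ∧ Lss π0 π1 π2 π3 < 1 / 2 := by
  have hπ0c : 0 < 1 - π0 := by linarith
  have ha : 0 < 1 + π0 * π2 + π1 / 2 := by nlinarith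
  have hb : 0 < 2 * π0 * π3 := by positivity
  set a := 1 + π0 * π2 + π1 / 2 with ha_def
  have hane : a ≠ 0 := ne_of_gt ha
  have hcpos : 0 < 2 * (1 - π0) * π0 * π3 / a ^ 2 := by positivity
  have harg1 : (1 : ℝ) < 1 + 2 * (1 - π0) * π0 * π3 / a ^ 2 := by linarith
  have hsqrt1 : (1 : ℝ) < Real.sqrt (1 + 2 * (1 - π0) * π0 * π3 / a ^ 2) := by
    calc (1:ℝ) = Real.sqrt 1 := by simp
      _ < _ := Real.sqrt_lt_sqrt zero_le_one harg1
  have hsqrt2 : Real.sqrt (1 + 2 * (1 - π0) * π0 * π3 / a ^ 2) < 1 + π0 * π3 / a := by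
    rw [Real.sqrt_lt' (by positivity)]
    have key : 2 * (1 - π0) * π0 * π3 / a ^ 2 < 2 * (π0 * π3 / a) + (π0 * π3 / a) ^ 2 := by
      have h1 : 2 * (1 - π0) * π0 * π3 / a ^ 2 < 2 * π0 * π3 / a := by
        rw [div_lt_div_iff₀ (pow_pos ha 2) ha]
        have h2 : 1 - π0 < a := by rw [ha_def]; nlinarith
        nlinarith [mul_pos (mul_pos hπ0 hπ3) ha]
      have h3 : 2 * π0 * π3 / a = 2 * (π0 * π3 / a) := by ring
      nlinarith [sq_nonneg (π0 * π3 / a)]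
    nlinarith
  constructor
  · unfold Lss
    rw [← ha_def]
    have := div_pos ha hb
    nlinarith
  · unfold Lss
    rw [← ha_def]
    have h : (a / (2 * π0 * π3)) * (Real.sqrt (1 + 2 * (1 - π0) * π0 * π3 / a ^ 2) - 1)
        < (a / (2 * π0 * π3)) * (π0 * π3 / a) := by
      apply mul_lt_mul_of_pos_left _ (div_pos ha hb)
      linarith
    have heq : (a / (2 * π0 * π3)) * (π0 * π3 / a) = 1 / 2 := by
      field_simp
    linarith
end
end

section
/- Assume 0 < π0 < 1 and π1, π2, π3 > 0. Let (L1, L2) ∈ Ω with ΔL1 + ΔL2 > 0, where ΔL_i = L_i − L_ss. Then 2·(J(L1,L2) − J_ss)·(1 − 2·L_ss − π1·L_ss)·(ΔL1 + ΔL2) − (2 + π1)·J(L1,L2)·(ΔL1 + ΔL2)² < 0. -/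
noncomputable section

set_option maxHeartbeats 1000000 in
/-- for `(L1, L2) ∈ Ω` with `ΔL1 + ΔL2 > 0`,
`2·(J − J_ss)·(1 − 2·L_ss − π1·L_ss)·(ΔL1 + ΔL2) − (2 + π1)·J·(ΔL1 + ΔL2)² < 0`. -/
theorem lyapunov_term_neg_of_pos_sum (π0 π1 π2 π3 : ℝ)
    (hπ0 : 0 < π0) (hπ0' : π0 < 1) (hπ1 : 0 < π1) (hπ2 : 0 < π2) (hπ3 : 0 < π3)
    (L1 L2 : ℝ) (hΩ : (L1, L2) ∈ Omega)
    (hsum : (L1 - Lss π0 π1 π2 π3) + (L2 - Lss π0 π1 π2 π3) > 0) :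
    2 * (J π2 π3 L1 L2 - Jss π0 π1 π2 π3) *
        (1 - 2 * Lss π0 π1 π2 π3 - π1 * Lss π0 π1 π2 π3) *
        ((L1 - Lss π0 π1 π2 π3) + (L2 - Lss π0 π1 π2 π3)) -
      (2 + π1) * J π2 π3 L1 L2 *
        ((L1 - Lss π0 π1 π2 π3) + (L2 - Lss π0 π1 π2 π3)) ^ 2 < 0 := by
  obtain ⟨hL1, hL2, hL12⟩ := hΩ
  simp only at hL1 hL2 hL12
  set x := Lss π0 π1 π2 π3 with hxdef
  set a : ℝ := 1 + π0 * π2 + π1 / 2 with hadef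
  have ha : 0 < a := by
    have := mul_pos hπ0 hπ2
    rw [hadef]; linarith
  have hnum : (0:ℝ) < 2 * (1 - π0) * π0 * π3 :=
    mul_pos (mul_pos (by linarith) hπ0) hπ3
  have harg : (0:ℝ) ≤ 1 + 2 * (1 - π0) * π0 * π3 / a ^ 2 := by
    have h2 : (0:ℝ) ≤ 2 * (1 - π0) * π0 * π3 / a ^ 2 := div_nonneg hnum.le (by positivity)
    linarith
  set r : ℝ := Real.sqrt (1 + 2 * (1 - π0) * π0 * π3 / a ^ 2) with hrdef
  have hr2 : r ^ 2 = 1 + 2 * (1 - π0) * π0 * π3 / a ^ 2 := Real.sq_sqrt harg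
  have hr1 : 1 < r := by
    have h3 : (0:ℝ) < 2 * (1 - π0) * π0 * π3 / a ^ 2 := div_pos hnum (by positivity)
    nlinarith [Real.sqrt_nonneg (1 + 2 * (1 - π0) * π0 * π3 / a ^ 2), hr2]
  have hxeq : x = (a / (2 * π0 * π3)) * (r - 1) := by rw [hxdef, Lss]
  have hx0 : 0 < x := by
    rw [hxeq]
    exact mul_pos (by positivity) (by linarith)
  have he : 2 * π0 * π3 * x + a = a * r := by
    rw [hxeq]; field_simp; ring
  have haar : a ^ 2 * r ^ 2 = a ^ 2 + 2 * (1 - π0) * π0 * π3 := by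
    rw [hr2]; field_simp
  have hsq : (2 * π0 * π3 * x + a) ^ 2 = a ^ 2 + 2 * (1 - π0) * π0 * π3 := by
    rw [he]; linear_combination haar
  rw [hadef] at hsq
  have hq' : (2 * π0 * π3) *
      (2 * π0 * π3 * x ^ 2 + (2 + 2 * π0 * π2 + π1) * x + π0 - 1) = 0 := by
    linear_combination hsq
  have hquad : 2 * π0 * π3 * x ^ 2 + (2 + 2 * π0 * π2 + π1) * x + π0 - 1 = 0 :=
    (mul_eq_zero.mp hq').resolve_left (by positivity : (0:ℝ) < 2 * π0 * π3).ne'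
  have hLss1 : (2 + π1) * x < 1 := by
    nlinarith [hquad, mul_pos hπ0 (mul_pos hπ3 (mul_pos hx0 hx0)),
      mul_pos hπ0 (mul_pos hπ2 hx0)]
  have hb : 0 < 1 - 2 * x - π1 * x := by nlinarith [hLss1]
  set s : ℝ := (L1 - x) + (L2 - x) with hsdef
  have hs : 0 < s := hsum
  set D : ℝ := 1 + π2 * (L1 + L2) + π3 * (L1 ^ 2 + L2 ^ 2) with hDdef
  set Dss : ℝ := 1 + 2 * π2 * x + 2 * π3 * x ^ 2 with hDssdef
  have hJeq : J π2 π3 L1 L2 = 1 / D := rfl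
  have hJsseq : Jss π0 π1 π2 π3 = 1 / Dss := rfl
  clear_value r
  clear_value a
  clear_value x
  clear_value s
  clear_value D
  clear_value Dss
  have hDss : 0 < Dss := by rw [hDssdef]; positivity
  have hDlt : Dss < D := by
    have key : D - Dss = π2 * s + π3 * (2 * x * s + (L1 - x) ^ 2 + (L2 - x) ^ 2) := by
      rw [hDdef, hDssdef, hsdef]; ring
    nlinarith [key, sq_nonneg (L1 - x), sq_nonneg (L2 - x), mul_pos hx0 hs,
      mul_pos hπ2 hs]
  have hD : 0 < D := lt_trans hDss hDlt
  have hJpos : 0 < J π2 π3 L1 L2 := by rw [hJeq]; positivity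
  have hJlt : J π2 π3 L1 L2 < Jss π0 π1 π2 π3 := by
    rw [hJeq, hJsseq]
    exact one_div_lt_one_div_of_lt hDss hDlt
  have h1 : (J π2 π3 L1 L2 - Jss π0 π1 π2 π3) * ((1 - 2 * x - π1 * x) * s) < 0 :=
    mul_neg_of_neg_of_pos (by linarith) (mul_pos hb hs)
  have h2 : 0 < (2 + π1) * J π2 π3 L1 L2 * s ^ 2 :=
    mul_pos (mul_pos (by linarith) hJpos) (pow_pos hs 2)
  nlinarith [h1, h2]
end
end

section
/- Assume 0 < π0 < 1 and π1, π2, π3 > 0. Define φ(L1,L2) = (1/2)·[(ΔL1 + ΔL2)² + (π3/π1)·(ΔL1 − ΔL2)²], where ΔL_i = L_i − L_ss. Then φ is a strict Lyapunov function on Ω for the vector field F: (i) φ(L1,L2) ≥ 0 for all (L1,L2) ∈ Ω, with φ(L1,L2) = 0 if and only if L1 = L2 = L_ss; and (ii) the derivative of φ along the vector field satisfies ∇φ(L1,L2)·F(L1,L2) < 0 for every (L1,L2) ∈ Ω with (L1,L2) ≠ (L_ss, L_ss), and ∇φ(L_ss,L_ss)·F(L_ss,L_ss) = 0. -/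
noncomputable section

/-- The Lyapunov function `φ(L1, L2)`. -/
def phi (π0 π1 π2 π3 L1 L2 : ℝ) : ℝ :=
  (1 / 2) * (((L1 - Lss π0 π1 π2 π3) + (L2 - Lss π0 π1 π2 π3)) ^ 2 +
    (π3 / π1) * ((L1 - Lss π0 π1 π2 π3) - (L2 - Lss π0 π1 π2 π3)) ^ 2)

/-- The derivative of `φ` along the vector field `F`, i.e. `∇φ·F`. -/
def phiDot (π0 π1 π2 π3 L1 L2 : ℝ) : ℝ :=
  deriv (fun x => phi π0 π1 π2 π3 x L2) L1 * F1 π0 π1 π2 π3 L1 L2 +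
    deriv (fun y => phi π0 π1 π2 π3 L1 y) L2 * F2 π0 π1 π2 π3 L1 L2

/-- Partial derivative of `φ` in the first variable. -/
lemma deriv_phi_1 (π0 π1 π2 π3 L1 L2 : ℝ) :
    deriv (fun x => phi π0 π1 π2 π3 x L2) L1 =
      ((L1 - Lss π0 π1 π2 π3) + (L2 - Lss π0 π1 π2 π3)) +
        (π3 / π1) * ((L1 - Lss π0 π1 π2 π3) - (L2 - Lss π0 π1 π2 π3)) := by
  set s := Lss π0 π1 π2 π3
  have h1 : HasDerivAt (fun t : ℝ => ((t - s) + (L2 - s))^2) (2*((L1-s)+(L2-s))) L1 := by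
    have h := (((hasDerivAt_id L1).sub_const s).add_const (L2-s)).fun_pow 2
    simp only [id_eq] at h; exact h.congr_deriv (by push_cast; ring)
  have h2 : HasDerivAt (fun t : ℝ => ((t - s) - (L2 - s))^2) (2*((L1-s)-(L2-s))) L1 := by
    have h := (((hasDerivAt_id L1).sub_const s).sub_const (L2-s)).fun_pow 2
    simp only [id_eq] at h; exact h.congr_deriv (by push_cast; ring)
  have H' : HasDerivAt (fun x => phi π0 π1 π2 π3 x L2)
      ((1/2) * (2*((L1-s)+(L2-s)) + (π3/π1) * (2*((L1-s)-(L2-s))))) L1 :=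
    (h1.add (h2.const_mul (π3/π1))).const_mul (1/2 : ℝ)
  rw [H'.deriv]; ring

/-- Partial derivative of `φ` in the second variable. -/
lemma deriv_phi_2 (π0 π1 π2 π3 L1 L2 : ℝ) :
    deriv (fun y => phi π0 π1 π2 π3 L1 y) L2 =
      ((L1 - Lss π0 π1 π2 π3) + (L2 - Lss π0 π1 π2 π3)) -
        (π3 / π1) * ((L1 - Lss π0 π1 π2 π3) - (L2 - Lss π0 π1 π2 π3)) := by
  set s := Lss π0 π1 π2 π3
  have h1 : HasDerivAt (fun t : ℝ => ((L1 - s) + (t - s))^2) (2*((L1-s)+(L2-s))) L2 := by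
    have h := (((hasDerivAt_id L2).sub_const s).const_add (L1-s)).fun_pow 2
    simp only [id_eq] at h; exact h.congr_deriv (by push_cast; ring)
  have h2 : HasDerivAt (fun t : ℝ => ((L1 - s) - (t - s))^2) (-(2*((L1-s)-(L2-s)))) L2 := by
    have h := (((hasDerivAt_id L2).sub_const s).const_sub (L1-s)).fun_pow 2
    simp only [id_eq] at h; exact h.congr_deriv (by push_cast; ring)
  have H' : HasDerivAt (fun y => phi π0 π1 π2 π3 L1 y)
      ((1/2) * (2*((L1-s)+(L2-s)) + (π3/π1) * (-(2*((L1-s)-(L2-s)))))) L2 :=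
    (h1.add (h2.const_mul (π3/π1))).const_mul (1/2 : ℝ)
  rw [H'.deriv]; ring

/-- The steady state satisfies the defining quadratic equation. -/
lemma Lss_quad (π0 π1 π2 π3 : ℝ) (hπ0 : 0 < π0) (hπ0' : π0 < 1) (hπ1 : 0 < π1)
    (hπ2 : 0 < π2) (hπ3 : 0 < π3) :
    2*π0*π3 * (Lss π0 π1 π2 π3)^2 + (2 + π1 + 2*π0*π2) * (Lss π0 π1 π2 π3) + (π0 - 1) = 0 := by
  have hC : (0:ℝ) < 1 + π0 * π2 + π1 / 2 := by positivity
  have hX : (0:ℝ) ≤ 1 + 2 * (1 - π0) * π0 * π3 / (1 + π0 * π2 + π1 / 2) ^ 2 := by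
    have : (0:ℝ) < 1 - π0 := by linarith
    positivity
  have ht := Real.sq_sqrt hX
  rw [Lss]
  set t := Real.sqrt (1 + 2 * (1 - π0) * π0 * π3 / (1 + π0 * π2 + π1 / 2) ^ 2)
  have h1 : (2*π0*π3 : ℝ) ≠ 0 := by positivity
  have h2 : (1 + π0 * π2 + π1 / 2 : ℝ) ≠ 0 := ne_of_gt hC
  field_simp at ht ⊢
  nlinarith [ht, sq_nonneg t]

/-- The steady state is nonnegative. -/
lemma Lss_nonneg (π0 π1 π2 π3 : ℝ) (hπ0 : 0 < π0) (hπ0' : π0 < 1) (hπ1 : 0 < π1)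
    (hπ2 : 0 < π2) (hπ3 : 0 < π3) : 0 ≤ Lss π0 π1 π2 π3 := by
  have hC : (0:ℝ) < 1 + π0 * π2 + π1 / 2 := by positivity
  have h1 : (1:ℝ) ≤ 1 + 2 * (1 - π0) * π0 * π3 / (1 + π0 * π2 + π1 / 2) ^ 2 := by
    have h0 : (0:ℝ) < 1 - π0 := by linarith
    have : (0:ℝ) ≤ 2 * (1 - π0) * π0 * π3 / (1 + π0 * π2 + π1 / 2) ^ 2 := by positivity
    linarith
  have h2 := Real.one_le_sqrt.mpr h1
  rw [Lss]
  have : (0:ℝ) ≤ Real.sqrt (1 + 2 * (1 - π0) * π0 * π3 / (1 + π0 * π2 + π1 / 2) ^ 2) - 1 := by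
    linarith
  positivity

/-- Core algebraic inequality for the Lyapunov decrease. -/
lemma core_ineq (π0 π1 π2 π3 s u v : ℝ)
    (hπ0 : 0 < π0) (hπ0' : π0 < 1) (hπ1 : 0 < π1) (hπ2 : 0 < π2) (hπ3 : 0 < π3)
    (hs0 : 0 ≤ s)
    (hq : 2*π0*π3 * s^2 + (2 + π1 + 2*π0*π2) * s + (π0 - 1) = 0)
    (hsum : 0 ≤ u + v + 2*s)
    (hpos : 0 < u^2 + v^2) :
    -((2+π1+2*π0*π2+2*π0*π3*s)*(u+v)^2 + (π3-2*π0*π3*s)*(u-v)^2)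
      - 2*π0*π3*(u+v+2*s)*(u^2+v^2)
      - (u+v)*2*(2*π0*π3 * s^2 + (2 + π1 + 2*π0*π2) * s + (π0 - 1)) < 0 := by
  rw [hq]
  have hs2 : (2 + π1 + 2*π0*π2) * s ≤ 1 - π0 := by
    have : (0:ℝ) ≤ 2*π0*π3*s^2 := by positivity
    linarith
  have hshalf : 2*π0*s < 1 := by nlinarith
  have h1 : 0 ≤ 2*π0*π3*(u+v+2*s)*(u^2+v^2) := by positivity
  have hc1 : (0:ℝ) < 2+π1+2*π0*π2+2*π0*π3*s := by positivity
  have hc2 : (0:ℝ) < π3-2*π0*π3*s := by nlinarith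
  have hmain : 0 < (2+π1+2*π0*π2+2*π0*π3*s)*(u+v)^2 + (π3-2*π0*π3*s)*(u-v)^2 := by
    have hsq : 0 < (u+v)^2 + (u-v)^2 := by nlinarith
    rcases (sq_nonneg (u+v)).eq_or_lt' with h | h
    · have h2 : 0 < (u-v)^2 := by linarith
      nlinarith [mul_nonneg hc1.le (sq_nonneg (u+v))]
    · nlinarith [mul_nonneg hc2.le (sq_nonneg (u-v))]
  linarith

/-- Closed form for `φ̇`. -/
lemma phiDot_eq (π0 π1 π2 π3 L1 L2 : ℝ) (hπ1 : π1 ≠ 0)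
    (hD : (1 + π2 * (L1 + L2) + π3 * (L1 ^ 2 + L2 ^ 2)) ≠ 0) :
    phiDot π0 π1 π2 π3 L1 L2 =
      (((L1 - Lss π0 π1 π2 π3)+(L2 - Lss π0 π1 π2 π3)) * (2*(1-(L1+L2)) - π1*(L1+L2)
          - 2*π0*(1 + π2*(L1+L2) + π3*(L1^2+L2^2)))
        - π3*((L1 - Lss π0 π1 π2 π3)-(L2 - Lss π0 π1 π2 π3))^2)
      / (1 + π2 * (L1 + L2) + π3 * (L1 ^ 2 + L2 ^ 2)) := by
  rw [phiDot, deriv_phi_1, deriv_phi_2]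
  unfold F1 F2 J
  field_simp
  ring

/-- `φ` is a strict Lyapunov function on `Ω` for the vector field `F`. -/
theorem phi_is_strict_lyapunov (π0 π1 π2 π3 : ℝ)
    (hπ0 : 0 < π0) (hπ0' : π0 < 1) (hπ1 : 0 < π1) (hπ2 : 0 < π2) (hπ3 : 0 < π3) :
    (∀ p ∈ Omega, 0 ≤ phi π0 π1 π2 π3 p.1 p.2 ∧
      (phi π0 π1 π2 π3 p.1 p.2 = 0 ↔
        p.1 = Lss π0 π1 π2 π3 ∧ p.2 = Lss π0 π1 π2 π3)) ∧
    (∀ p ∈ Omega, p ≠ (Lss π0 π1 π2 π3, Lss π0 π1 π2 π3) →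
      phiDot π0 π1 π2 π3 p.1 p.2 < 0) ∧
    phiDot π0 π1 π2 π3 (Lss π0 π1 π2 π3) (Lss π0 π1 π2 π3) = 0 := by
  set s := Lss π0 π1 π2 π3 with hs
  have hk : (0:ℝ) < π3 / π1 := by positivity
  refine ⟨?_, ?_, ?_⟩
  · rintro ⟨L1, L2⟩ ⟨hL1, hL2, hL12⟩
    simp only at hL1 hL2 ⊢
    constructor
    · rw [phi]
      nlinarith [sq_nonneg ((L1 - s) + (L2 - s)), sq_nonneg ((L1 - s) - (L2 - s)),
        mul_nonneg hk.le (sq_nonneg ((L1 - s) - (L2 - s)))]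
    · constructor
      · intro h
        rw [phi] at h
        have h1 : (0:ℝ) ≤ ((L1 - s) + (L2 - s))^2 := sq_nonneg _
        have h2 : (0:ℝ) ≤ (π3/π1) * ((L1 - s) - (L2 - s))^2 :=
          mul_nonneg hk.le (sq_nonneg _)
        have ha : ((L1 - s) + (L2 - s))^2 = 0 := by linarith
        have hb : (π3/π1) * ((L1 - s) - (L2 - s))^2 = 0 := by linarith
        have hb' : ((L1 - s) - (L2 - s))^2 = 0 := by
          rcases mul_eq_zero.mp hb with h' | h'
          · exact absurd h' (ne_of_gt hk)
          · exact h'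
        have ha0 : (L1 - s) + (L2 - s) = 0 := by
          have := sq_eq_zero_iff.mp ha; exact this
        have hb0 : (L1 - s) - (L2 - s) = 0 := by
          have := sq_eq_zero_iff.mp hb'; exact this
        constructor <;> linarith
      · rintro ⟨h1, h2⟩
        rw [phi, h1, h2]
        simp [hs]
  · rintro ⟨L1, L2⟩ ⟨hL1, hL2, hL12⟩ hne
    simp only at hL1 hL2 ⊢
    have hq := Lss_quad π0 π1 π2 π3 hπ0 hπ0' hπ1 hπ2 hπ3
    have hs0 := Lss_nonneg π0 π1 π2 π3 hπ0 hπ0' hπ1 hπ2 hπ3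
    rw [← hs] at hq hs0
    have hD : (0:ℝ) < 1 + π2 * (L1 + L2) + π3 * (L1 ^ 2 + L2 ^ 2) := by
      have h1 : (0:ℝ) ≤ π2 * (L1 + L2) := mul_nonneg hπ2.le (by linarith)
      have h2 : (0:ℝ) ≤ π3 * (L1 ^ 2 + L2 ^ 2) := by positivity
      linarith
    have hpos : 0 < (L1 - s)^2 + (L2 - s)^2 := by
      have : L1 ≠ s ∨ L2 ≠ s := by
        by_contra h
        push_neg at h
        exact hne (by rw [Prod.mk.injEq]; exact ⟨h.1, h.2⟩)
      rcases this with h | h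
      · have h' : L1 - s ≠ 0 := sub_ne_zero.mpr h
        have := pow_pos (abs_pos.mpr h') 2
        nlinarith [sq_abs (L1 - s), sq_nonneg (L2 - s)]
      · have h' : L2 - s ≠ 0 := sub_ne_zero.mpr h
        have := pow_pos (abs_pos.mpr h') 2
        nlinarith [sq_abs (L2 - s), sq_nonneg (L1 - s)]
    rw [phiDot_eq π0 π1 π2 π3 L1 L2 (ne_of_gt hπ1) (ne_of_gt hD)]
    apply div_neg_of_neg_of_pos _ hD
    rw [← hs]
    have h := core_ineq π0 π1 π2 π3 s (L1 - s) (L2 - s) hπ0 hπ0' hπ1 hπ2 hπ3 hs0 hq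
      (by linarith) hpos
    calc ((L1-s)+(L2-s)) * (2*(1-(L1+L2)) - π1*(L1+L2)
          - 2*π0*(1 + π2*(L1+L2) + π3*(L1^2+L2^2))) - π3*((L1-s)-(L2-s))^2
        = -((2+π1+2*π0*π2+2*π0*π3*s)*((L1-s)+(L2-s))^2 + (π3-2*π0*π3*s)*((L1-s)-(L2-s))^2)
          - 2*π0*π3*((L1-s)+(L2-s)+2*s)*((L1-s)^2+(L2-s)^2)
          - ((L1-s)+(L2-s))*2*(2*π0*π3 * s^2 + (2 + π1 + 2*π0*π2) * s + (π0 - 1)) := by ring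
      _ < 0 := h
  · rw [phiDot, deriv_phi_1, deriv_phi_2, ← hs]
    ring
end
end

section
/- Assume π1, π2, π3 > 0 and let ε > 0. If L = (L1, L2) : [0, ∞) → ℝ² is a differentiable solution of the system L1' = F1(L1,L2), L2' = F2(L1,L2) with L(t) ∈ Ω for all t ≥ 0 and |L1(0) − L2(0)| ≤ ε, then |L1(t) − L2(t)| ≤ ε for all t ≥ 0; more generally, the function t ↦ |L1(t) − L2(t)| is nonincreasing on [0, ∞). -/
noncomputable section

/-- along solutions in `Ω`, `|L1 − L2|` is nonincreasing on `[0, ∞)`;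
in particular if `|L1(0) − L2(0)| ≤ ε` then `|L1(t) − L2(t)| ≤ ε` for all `t ≥ 0`. -/
theorem diff_nonincreasing (π0 π1 π2 π3 ε : ℝ)
    (hπ1 : 0 < π1) (hπ2 : 0 < π2) (hπ3 : 0 < π3) (hε : 0 < ε)
    (L1 L2 : ℝ → ℝ)
    (hd1 : ∀ t : ℝ, 0 ≤ t → HasDerivAt L1 (F1 π0 π1 π2 π3 (L1 t) (L2 t)) t)
    (hd2 : ∀ t : ℝ, 0 ≤ t → HasDerivAt L2 (F2 π0 π1 π2 π3 (L1 t) (L2 t)) t)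
    (hΩ : ∀ t : ℝ, 0 ≤ t → (L1 t, L2 t) ∈ Omega)
    (hinit : |L1 0 - L2 0| ≤ ε) :
    (∀ t : ℝ, 0 ≤ t → |L1 t - L2 t| ≤ ε) ∧
      AntitoneOn (fun t => |L1 t - L2 t|) (Set.Ici (0 : ℝ)) := by

  have hJpos : ∀ t : ℝ, 0 ≤ t → 0 < J π2 π3 (L1 t) (L2 t) := by
    intro t ht
    obtain ⟨h1, h2, h3⟩ := hΩ t ht
    simp only [Omega, Set.mem_setOf_eq] at h1 h2 h3
    have hden : (0:ℝ) < 1 + π2 * (L1 t + L2 t) + π3 * ((L1 t) ^ 2 + (L2 t) ^ 2) := by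
      positivity
    exact div_pos one_pos hden
  have hdu : ∀ t : ℝ, 0 ≤ t →
      HasDerivAt (fun s => L1 s - L2 s)
        (-(π1 * J π2 π3 (L1 t) (L2 t)) * (L1 t - L2 t)) t := by
    intro t ht
    have h := (hd1 t ht).fun_sub (hd2 t ht)
    refine h.congr_deriv ?_
    simp only [F1, F2]
    ring
  have hg : AntitoneOn (fun t => (L1 t - L2 t) ^ 2) (Set.Ici (0 : ℝ)) := by
    apply antitoneOn_of_deriv_nonpos (convex_Ici 0)
    · intro t ht
      exact ((hdu t ht).pow 2).continuousAt.continuousWithinAt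
    · intro t ht
      rw [interior_Ici] at ht
      exact (((hdu t (le_of_lt ht)).pow 2).differentiableAt).differentiableWithinAt
    · intro t ht
      rw [interior_Ici] at ht
      have ht' : (0:ℝ) ≤ t := le_of_lt ht
      have hderiv := ((hdu t ht').pow 2).deriv
      rw [show (fun t => (L1 t - L2 t) ^ 2) = (fun s => L1 s - L2 s) ^ 2 from rfl, hderiv]
      push_cast
      simp only [pow_one]
      have hJ := hJpos t ht'
      nlinarith [sq_nonneg (L1 t - L2 t), mul_pos hπ1 hJ,
        mul_nonneg (le_of_lt (mul_pos hπ1 hJ)) (sq_nonneg (L1 t - L2 t))]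
  have habs : AntitoneOn (fun t => |L1 t - L2 t|) (Set.Ici (0 : ℝ)) := by
    intro s hs t ht hst
    have h := hg hs ht hst
    have := Real.sqrt_le_sqrt h
    rwa [Real.sqrt_sq_eq_abs, Real.sqrt_sq_eq_abs] at this
  refine ⟨fun t ht => ?_, habs⟩
  exact le_trans (habs (Set.self_mem_Ici) ht ht) hinit
end
end

section
/- Assume 0 < π0 < 1 and π1, π2, π3 > 0. The system admits no nonconstant periodic orbits in Ω: if L = (L1, L2) : ℝ → ℝ² is a differentiable solution of the system L1' = F1(L1,L2), L2' = F2(L1,L2) with L(t) ∈ Ω for all t, and L is periodic with some period T > 0, then L is constant, with L(t) = (L_ss, L_ss) for all t. -/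
noncomputable section

/-- A periodic function with nonpositive derivative everywhere is constant,
hence its derivative is zero everywhere. -/
lemma deriv_zero_of_periodic_nonpos (f g : ℝ → ℝ) (T : ℝ) (hT : 0 < T)
    (hd : ∀ t, HasDerivAt f (g t) t) (hg : ∀ t, g t ≤ 0)
    (hper : ∀ t, f (t + T) = f t) : ∀ t, g t = 0 := by
  have hdiff : Differentiable ℝ f := fun t => (hd t).differentiableAt
  have hanti : Antitone f := by
    refine antitone_of_deriv_nonpos hdiff (fun t => ?_)
    rw [(hd t).deriv]; exact hg t
  have hiter : ∀ (n : ℕ) (s : ℝ), f (s + n * T) = f s := by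
    intro n
    induction n with
    | zero => simp
    | succ k ih =>
      intro s
      have h : s + ((k : ℝ) + 1) * T = (s + T) + k * T := by ring
      push_cast
      rw [h, ih (s + T), hper s]
  have key : ∀ a b, a ≤ b → f a = f b := by
    intro a b hab
    refine le_antisymm ?_ (hanti hab)
    obtain ⟨n, hn⟩ := exists_nat_ge ((b - a) / T)
    have h1 : b ≤ a + n * T := by
      rw [div_le_iff₀ hT] at hn; linarith
    calc f a = f (a + n * T) := (hiter n a).symm
      _ ≤ f b := hanti h1
  have hconst : ∀ t, f t = f 0 := by
    intro t
    rcases le_total t 0 with h | h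
    · exact key t 0 h
    · exact (key 0 t h).symm
  intro t
  have hf : f = fun _ => f 0 := funext hconst
  have h1 : HasDerivAt (fun _ : ℝ => f 0) (g t) t := by rw [← hf]; exact hd t
  exact h1.unique (hasDerivAt_const t (f 0))

/-- Sign analysis of the vector field on the diagonal. -/
lemma key_sign (π0 π1 π2 π3 : ℝ) (hπ0 : 0 < π0) (hπ0' : π0 < 1)
    (hπ1 : 0 < π1) (hπ2 : 0 < π2) (hπ3 : 0 < π3) (x : ℝ) (hx : 0 ≤ x) :
    (x - Lss π0 π1 π2 π3) * F1 π0 π1 π2 π3 x x ≤ 0 ∧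
    ((x - Lss π0 π1 π2 π3) * F1 π0 π1 π2 π3 x x = 0 → x = Lss π0 π1 π2 π3) := by
  have hA : 0 < 1 + π0 * π2 + π1 / 2 := by nlinarith
  have hargpos : (0:ℝ) ≤ (1 + π0 * π2 + π1 / 2) ^ 2 + 2 * (1 - π0) * π0 * π3 := by
    nlinarith [sq_nonneg (1 + π0 * π2 + π1 / 2),
      mul_pos (mul_pos (by linarith : (0:ℝ) < 1 - π0) hπ0) hπ3]
  have hs0 : 0 ≤ Real.sqrt ((1 + π0 * π2 + π1 / 2) ^ 2 + 2 * (1 - π0) * π0 * π3) :=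
    Real.sqrt_nonneg _
  have hs2 : (Real.sqrt ((1 + π0 * π2 + π1 / 2) ^ 2 + 2 * (1 - π0) * π0 * π3)) ^ 2
      = (1 + π0 * π2 + π1 / 2) ^ 2 + 2 * (1 - π0) * π0 * π3 := Real.sq_sqrt hargpos
  have hl : 2 * π0 * π3 * Lss π0 π1 π2 π3
      = Real.sqrt ((1 + π0 * π2 + π1 / 2) ^ 2 + 2 * (1 - π0) * π0 * π3)
        - (1 + π0 * π2 + π1 / 2) := by
    unfold Lss
    have harg : 1 + 2 * (1 - π0) * π0 * π3 / (1 + π0 * π2 + π1 / 2) ^ 2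
        = ((1 + π0 * π2 + π1 / 2) ^ 2 + 2 * (1 - π0) * π0 * π3)
          / (1 + π0 * π2 + π1 / 2) ^ 2 := by
      field_simp
    rw [harg, Real.sqrt_div hargpos, Real.sqrt_sq hA.le]
    field_simp
  have hc : (2 * π0 * π3) ≠ 0 := by positivity
  have hN : 2 * π0 * π3 * (Lss π0 π1 π2 π3) ^ 2
      + (2 + π1 + 2 * π0 * π2) * Lss π0 π1 π2 π3 = 1 - π0 := by
    apply mul_left_cancel₀ hc
    linear_combination (2 * π0 * π3 * Lss π0 π1 π2 π3
      + Real.sqrt ((1 + π0 * π2 + π1 / 2) ^ 2 + 2 * (1 - π0) * π0 * π3)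
      + (1 + π0 * π2 + π1 / 2)) * hl + hs2
  have hd : (0:ℝ) < 1 + π2 * (x + x) + π3 * (x ^ 2 + x ^ 2) := by
    nlinarith [sq_nonneg x, mul_nonneg hπ2.le hx]
  have hF : (1 + π2 * (x + x) + π3 * (x ^ 2 + x ^ 2)) * F1 π0 π1 π2 π3 x x
      = (1 - π0) - (2 + π1 + 2 * π0 * π2) * x - 2 * π0 * π3 * x ^ 2 := by
    unfold F1 J
    field_simp
    ring
  have hP : 0 < 2 * π0 * π3 * (x + Lss π0 π1 π2 π3) + (2 + π1 + 2 * π0 * π2) := by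
    nlinarith [hl, hs0, hA, mul_nonneg (mul_nonneg (by positivity : (0:ℝ) ≤ 2 * π0) hπ3.le) hx]
  have hprod : (1 + π2 * (x + x) + π3 * (x ^ 2 + x ^ 2))
      * ((x - Lss π0 π1 π2 π3) * F1 π0 π1 π2 π3 x x)
      = -((x - Lss π0 π1 π2 π3) ^ 2
          * (2 * π0 * π3 * (x + Lss π0 π1 π2 π3) + (2 + π1 + 2 * π0 * π2))) := by
    linear_combination (x - Lss π0 π1 π2 π3) * hF - (x - Lss π0 π1 π2 π3) * hN
  have hRnonneg : 0 ≤ (x - Lss π0 π1 π2 π3) ^ 2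
      * (2 * π0 * π3 * (x + Lss π0 π1 π2 π3) + (2 + π1 + 2 * π0 * π2)) :=
    mul_nonneg (sq_nonneg _) hP.le
  constructor
  · nlinarith [hprod, hRnonneg, hd]
  · intro h0
    have hR0 : (x - Lss π0 π1 π2 π3) ^ 2
        * (2 * π0 * π3 * (x + Lss π0 π1 π2 π3) + (2 + π1 + 2 * π0 * π2)) = 0 := by
      linear_combination hprod - (1 + π2 * (x + x) + π3 * (x ^ 2 + x ^ 2)) * h0
    have h1 : (x - Lss π0 π1 π2 π3) ^ 2 = 0 := by
      rcases mul_eq_zero.mp hR0 with h | h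
      · exact h
      · exact absurd h (ne_of_gt hP)
    have h2 : x - Lss π0 π1 π2 π3 = 0 := by
      exact sq_eq_zero_iff.mp h1
    linarith

/-- the system admits no nonconstant periodic orbits in `Ω`: any
periodic solution staying in `Ω` is the constant solution `(L_ss, L_ss)`. -/
theorem no_periodic_orbits (π0 π1 π2 π3 T : ℝ)
    (hπ0 : 0 < π0) (hπ0' : π0 < 1) (hπ1 : 0 < π1) (hπ2 : 0 < π2) (hπ3 : 0 < π3)
    (hT : 0 < T)
    (L1 L2 : ℝ → ℝ)
    (hd1 : ∀ t : ℝ, HasDerivAt L1 (F1 π0 π1 π2 π3 (L1 t) (L2 t)) t)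
    (hd2 : ∀ t : ℝ, HasDerivAt L2 (F2 π0 π1 π2 π3 (L1 t) (L2 t)) t)
    (hΩ : ∀ t : ℝ, (L1 t, L2 t) ∈ Omega)
    (hper : ∀ t : ℝ, L1 (t + T) = L1 t ∧ L2 (t + T) = L2 t) :
    ∀ t : ℝ, L1 t = Lss π0 π1 π2 π3 ∧ L2 t = Lss π0 π1 π2 π3 := by
  have hΩ' : ∀ t, 0 ≤ L1 t ∧ 0 ≤ L2 t ∧ L1 t + L2 t ≤ 1 := by
    intro t
    have h := hΩ t
    simpa [Omega, Set.mem_setOf_eq] using h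
  have hJd : ∀ t, 0 < 1 + π2 * (L1 t + L2 t) + π3 * ((L1 t) ^ 2 + (L2 t) ^ 2) := by
    intro t
    obtain ⟨h1, h2, _⟩ := hΩ' t
    nlinarith [sq_nonneg (L1 t), sq_nonneg (L2 t), mul_nonneg hπ2.le (add_nonneg h1 h2),
      mul_nonneg hπ3.le (add_nonneg (sq_nonneg (L1 t)) (sq_nonneg (L2 t)))]
  have hJpos : ∀ t, 0 < J π2 π3 (L1 t) (L2 t) := by
    intro t
    unfold J
    exact one_div_pos.mpr (hJd t)
  have hFF : ∀ t, F1 π0 π1 π2 π3 (L1 t) (L2 t) - F2 π0 π1 π2 π3 (L1 t) (L2 t)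
      = -(π1 * J π2 π3 (L1 t) (L2 t) * (L1 t - L2 t)) := by
    intro t
    unfold F1 F2
    ring
  -- Step 1: L2 = L1
  have hD0 : ∀ t, L2 t = L1 t := by
    have hgz := deriv_zero_of_periodic_nonpos (fun t => (L1 t - L2 t) ^ 2)
      (fun t => 2 * (L1 t - L2 t)
        * (F1 π0 π1 π2 π3 (L1 t) (L2 t) - F2 π0 π1 π2 π3 (L1 t) (L2 t))) T hT
      (fun t => by
        have h := ((hd1 t).sub (hd2 t)).fun_pow 2
        refine h.congr_deriv ?_
        push_cast [Pi.sub_apply]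
        ring)
      (fun t => by
        show 2 * (L1 t - L2 t)
          * (F1 π0 π1 π2 π3 (L1 t) (L2 t) - F2 π0 π1 π2 π3 (L1 t) (L2 t)) ≤ 0
        rw [hFF t]
        nlinarith [mul_nonneg (mul_nonneg hπ1.le (hJpos t).le) (sq_nonneg (L1 t - L2 t))])
      (fun t => by simp only [(hper t).1, (hper t).2])
    intro t
    have h : 2 * (L1 t - L2 t)
        * (F1 π0 π1 π2 π3 (L1 t) (L2 t) - F2 π0 π1 π2 π3 (L1 t) (L2 t)) = 0 := hgz t
    rw [hFF t] at h
    have hx2 : (L1 t - L2 t) ^ 2 * (2 * (π1 * J π2 π3 (L1 t) (L2 t))) = 0 := by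
      linear_combination -h
    have hc : 2 * (π1 * J π2 π3 (L1 t) (L2 t)) ≠ 0 :=
      ne_of_gt (by nlinarith [hJpos t])
    have h1 : (L1 t - L2 t) ^ 2 = 0 := (mul_eq_zero.mp hx2).resolve_right hc
    have h2 : L1 t - L2 t = 0 := sq_eq_zero_iff.mp h1
    linarith
  -- Step 2: L1 = Lss
  have hL1 : ∀ t, L1 t = Lss π0 π1 π2 π3 := by
    have hgz := deriv_zero_of_periodic_nonpos
      (fun t => (L1 t - Lss π0 π1 π2 π3) ^ 2)
      (fun t => 2 * (L1 t - Lss π0 π1 π2 π3) * F1 π0 π1 π2 π3 (L1 t) (L2 t)) T hT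
      (fun t => by
        have h := ((hd1 t).sub_const (Lss π0 π1 π2 π3)).fun_pow 2
        refine h.congr_deriv ?_
        push_cast
        ring)
      (fun t => by
        have hkey := (key_sign π0 π1 π2 π3 hπ0 hπ0' hπ1 hπ2 hπ3 (L1 t) (hΩ' t).1).1
        show 2 * (L1 t - Lss π0 π1 π2 π3) * F1 π0 π1 π2 π3 (L1 t) (L2 t) ≤ 0
        rw [hD0 t]
        nlinarith [hkey])
      (fun t => by simp only [(hper t).1])
    intro t
    have h : 2 * (L1 t - Lss π0 π1 π2 π3) * F1 π0 π1 π2 π3 (L1 t) (L2 t) = 0 := hgz t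
    rw [hD0 t] at h
    have hkey := (key_sign π0 π1 π2 π3 hπ0 hπ0' hπ1 hπ2 hπ3 (L1 t) (hΩ' t).1).2
    apply hkey
    linarith
  intro t
  exact ⟨hL1 t, (hD0 t).trans (hL1 t)⟩
end
end

section
/- Assume 0 < π0 < 1 and π1, π2, π3 > 0. The fixed point (L_ss, L_ss) is globally asymptotically attracting for trajectories that remain in Ω: if L = (L1, L2) : [0, ∞) → ℝ² is a differentiable solution of the system L1' = F1(L1,L2), L2' = F2(L1,L2) with L(t) ∈ Ω for all t ≥ 0, then L(t) → (L_ss, L_ss) as t → ∞. -/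
set_option maxHeartbeats 1000000

noncomputable section

lemma sigma_props (π0 π1 π2 π3 : ℝ)
    (hπ0 : 0 < π0) (hπ0' : π0 < 1) (hπ1 : 0 < π1) (hπ2 : 0 < π2) (hπ3 : 0 < π3) :
    π0 * π3 * (2 * Lss π0 π1 π2 π3) ^ 2 + 2 * (1 + π0 * π2 + π1 / 2) * (2 * Lss π0 π1 π2 π3)
      = 2 * (1 - π0) ∧ 0 ≤ 2 * Lss π0 π1 π2 π3 ∧ 2 * Lss π0 π1 π2 π3 ≤ 1 := by
  obtain ⟨A, hA⟩ : ∃ x : ℝ, (1 : ℝ) + π0 * π2 + π1 / 2 = x := ⟨_, rfl⟩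
  have hApos : 0 < A := by rw [← hA]; positivity
  have hA1 : 1 ≤ A := by nlinarith [hA, mul_pos hπ0 hπ2]
  have hL : Lss π0 π1 π2 π3
      = (A / (2 * π0 * π3)) * (Real.sqrt (1 + 2 * (1 - π0) * π0 * π3 / A ^ 2) - 1) := by
    rw [Lss, hA]
  obtain ⟨r, hr⟩ : ∃ x : ℝ, Real.sqrt (1 + 2 * (1 - π0) * π0 * π3 / A ^ 2) = x := ⟨_, rfl⟩
  have harg : 1 ≤ 1 + 2 * (1 - π0) * π0 * π3 / A ^ 2 := by
    have h1 : 0 ≤ 2 * (1 - π0) * π0 * π3 / A ^ 2 :=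
      div_nonneg (by nlinarith [mul_pos hπ0 hπ3]) (by positivity)
    linarith
  have hr1 : 1 ≤ r := by rw [← hr]; exact Real.one_le_sqrt.mpr harg
  have hr2 : r ^ 2 * A ^ 2 = A ^ 2 + 2 * (1 - π0) * π0 * π3 := by
    have h := Real.sq_sqrt (le_trans zero_le_one harg)
    rw [hr] at h
    rw [h, add_mul, one_mul, div_mul_cancel₀ _ (pow_pos hApos 2).ne']
  rw [hL, hr]
  rw [hA]
  obtain ⟨σ, hσ⟩ : ∃ x : ℝ, 2 * (A / (2 * π0 * π3) * (r - 1)) = x := ⟨_, rfl⟩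
  rw [hσ]
  have hπ03 : (0:ℝ) < π0 * π3 := by positivity
  have hσval : σ * (π0 * π3) = A * (r - 1) := by
    rw [← hσ]; field_simp
  have heq : π0 * π3 * σ ^ 2 + 2 * A * σ = 2 * (1 - π0) := by
    have expand : (π0 * π3 * σ ^ 2 + 2 * A * σ) * (π0 * π3)
        = (2 * (1 - π0)) * (π0 * π3) := by
      have h1 : (π0 * π3 * σ ^ 2 + 2 * A * σ) * (π0 * π3)
          = (σ * (π0 * π3)) ^ 2 + 2 * A * (σ * (π0 * π3)) := by ring
      rw [h1, hσval]
      nlinarith [hr2]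
    exact mul_right_cancel₀ (ne_of_gt hπ03) expand
  have hσ0 : 0 ≤ σ := by
    rw [← hσ]
    have : 0 ≤ r - 1 := by linarith
    positivity
  refine ⟨heq, hσ0, ?_⟩
  by_contra h
  push_neg at h
  nlinarith [heq, mul_pos hπ03 (by nlinarith : (0:ℝ) < σ ^ 2),
    mul_nonneg (by linarith : (0:ℝ) ≤ A - 1) (by linarith : (0:ℝ) ≤ σ - 1)]

lemma key_ineq (π0 π1 π2 π3 σ : ℝ)
    (hπ0 : 0 < π0) (hπ1 : 0 < π1) (hπ2 : 0 < π2) (hπ3 : 0 < π3)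
    (hσeq : π0 * π3 * σ ^ 2 + 2 * (1 + π0 * π2 + π1 / 2) * σ = 2 * (1 - π0))
    (hσ0 : 0 ≤ σ) (hσ1 : σ ≤ 1)
    (x y : ℝ) (hx : 0 ≤ x) (hy : 0 ≤ y) (hxy : x + y ≤ 1) :
    2 * (x + y - σ) * (F1 π0 π1 π2 π3 x y + F2 π0 π1 π2 π3 x y)
      + 2 * (2 * π0 * π3 / π1) * (x - y) * (F1 π0 π1 π2 π3 x y - F2 π0 π1 π2 π3 x y)
      ≤ -(min 2 π1 / (1 + π2 + π3))
        * ((x + y - σ) ^ 2 + (2 * π0 * π3 / π1) * (x - y) ^ 2) := by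
  obtain ⟨D, hD⟩ : ∃ d : ℝ, (1 : ℝ) + π2 * (x + y) + π3 * (x ^ 2 + y ^ 2) = d := ⟨_, rfl⟩
  have hx1 : x ≤ 1 := by linarith
  have hy1 : y ≤ 1 := by linarith
  have hsq0 : (0:ℝ) ≤ x ^ 2 + y ^ 2 := by positivity
  have hsq : x ^ 2 + y ^ 2 ≤ 1 := by nlinarith
  have hs0 : (0:ℝ) ≤ x + y := by linarith
  have hD1 : 1 ≤ D := by nlinarith [hD, mul_nonneg hπ2.le hs0, mul_nonneg hπ3.le hsq0]
  have hDpos : 0 < D := by linarith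
  have hDm : D ≤ 1 + π2 + π3 := by
    nlinarith [hD, mul_le_of_le_one_right hπ2.le hxy, mul_le_of_le_one_right hπ3.le hsq]
  obtain ⟨lam, hlam⟩ : ∃ l : ℝ, min 2 π1 / (1 + π2 + π3) = l := ⟨_, rfl⟩
  have hDm0 : (0:ℝ) < 1 + π2 + π3 := by linarith
  have hlampos : 0 < lam := by
    rw [← hlam]; exact div_pos (lt_min two_pos hπ1) hDm0
  have hlam2 : lam * (1 + π2 + π3) ≤ 2 := by
    rw [← hlam, div_mul_cancel₀ _ (ne_of_gt hDm0)]; exact min_le_left _ _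
  have hlam1 : lam * (1 + π2 + π3) ≤ π1 := by
    rw [← hlam, div_mul_cancel₀ _ (ne_of_gt hDm0)]; exact min_le_right _ _
  have hlamD2 : lam * D ≤ 2 := le_trans (by nlinarith) hlam2
  have hlamD1 : lam * D ≤ π1 := le_trans (by nlinarith) hlam1
  obtain ⟨K, hK⟩ : ∃ k : ℝ, 2 * π0 * π3 / π1 = k := ⟨_, rfl⟩
  have hKpos : 0 < K := by rw [← hK]; positivity
  have hKπ1 : K * π1 = 2 * π0 * π3 := by rw [← hK]; field_simp
  rw [hlam, hK]
  have hJ : J π2 π3 x y = 1 / D := by rw [J, hD]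
  rw [F1, F2, hJ]
  have main : (2 * (x + y - σ) * ((1 / D * (1 - x - y) - π0 - π1 * (1 / D) * x)
        + (1 / D * (1 - x - y) - π0 - π1 * (1 / D) * y))
      + 2 * K * (x - y) * ((1 / D * (1 - x - y) - π0 - π1 * (1 / D) * x)
        - (1 / D * (1 - x - y) - π0 - π1 * (1 / D) * y))
      + lam * ((x + y - σ) ^ 2 + K * (x - y) ^ 2)) * D
      = 2 * (x + y - σ) * (2 * (1 - x - y) - π1 * (x + y) - 2 * π0 * D)
        - 2 * K * π1 * (x - y) ^ 2
        + lam * D * ((x + y - σ) ^ 2 + K * (x - y) ^ 2) := by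
    field_simp
    ring
  have hup : (0:ℝ) ≤ x + y + σ := by linarith
  have hlow : (0:ℝ) ≤ 1 + (x + y - σ) := by linarith
  have hpoly : 2 * (x + y - σ) * (2 * (1 - x - y) - π1 * (x + y) - 2 * π0 * D)
        - 2 * K * π1 * (x - y) ^ 2
        + lam * D * ((x + y - σ) ^ 2 + K * (x - y) ^ 2) ≤ 0 := by
    have hg : 2 * (1 - x - y) - π1 * (x + y) - 2 * π0 * D
        = -(x + y - σ) * (π0 * π3 * (x + y + σ) + 2 * (1 + π0 * π2 + π1 / 2))
          - π0 * π3 * (x - y) ^ 2 := by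
      rw [← hD]; linear_combination -hσeq
    rw [hg]
    nlinarith [sq_nonneg (x + y - σ), sq_nonneg (x - y),
      mul_nonneg (sq_nonneg (x + y - σ)) (mul_nonneg (mul_nonneg hπ0.le hπ3.le) hup),
      mul_nonneg (mul_nonneg (mul_nonneg hπ0.le hπ3.le) (sq_nonneg (x - y))) hlow,
      mul_le_mul_of_nonneg_right hlamD2 (sq_nonneg (x + y - σ)),
      mul_le_mul_of_nonneg_right hlamD1 (mul_nonneg hKpos.le (sq_nonneg (x - y))),
      mul_pos hπ0 hπ2, mul_pos hπ0 hπ3, hKπ1]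
  have h1 : (2 * (x + y - σ) * ((1 / D * (1 - x - y) - π0 - π1 * (1 / D) * x)
        + (1 / D * (1 - x - y) - π0 - π1 * (1 / D) * y))
      + 2 * K * (x - y) * ((1 / D * (1 - x - y) - π0 - π1 * (1 / D) * x)
        - (1 / D * (1 - x - y) - π0 - π1 * (1 / D) * y))
      + lam * ((x + y - σ) ^ 2 + K * (x - y) ^ 2)) * D ≤ 0 * D := by
    rw [main]; simpa using hpoly
  have h2 := le_of_mul_le_mul_right h1 hDpos
  linarith [h2]

/-- `(L_ss, L_ss)` is globally asymptotically attracting for trajectories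
remaining in `Ω`: every solution staying in `Ω` for `t ≥ 0` converges to it. -/
theorem global_asymptotic_stability (π0 π1 π2 π3 : ℝ)
    (hπ0 : 0 < π0) (hπ0' : π0 < 1) (hπ1 : 0 < π1) (hπ2 : 0 < π2) (hπ3 : 0 < π3)
    (L1 L2 : ℝ → ℝ)
    (hd1 : ∀ t : ℝ, 0 ≤ t → HasDerivAt L1 (F1 π0 π1 π2 π3 (L1 t) (L2 t)) t)
    (hd2 : ∀ t : ℝ, 0 ≤ t → HasDerivAt L2 (F2 π0 π1 π2 π3 (L1 t) (L2 t)) t)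
    (hΩ : ∀ t : ℝ, 0 ≤ t → (L1 t, L2 t) ∈ Omega) :
    Filter.Tendsto (fun t => (L1 t, L2 t)) Filter.atTop
      (nhds (Lss π0 π1 π2 π3, Lss π0 π1 π2 π3)) := by
  obtain ⟨hσeq, hσ0, hσ1⟩ := sigma_props π0 π1 π2 π3 hπ0 hπ0' hπ1 hπ2 hπ3
  obtain ⟨σ, hσdef⟩ : ∃ x : ℝ, 2 * Lss π0 π1 π2 π3 = x := ⟨_, rfl⟩
  rw [hσdef] at hσeq hσ0 hσ1
  obtain ⟨K, hK⟩ : ∃ k : ℝ, 2 * π0 * π3 / π1 = k := ⟨_, rfl⟩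
  have hKpos : 0 < K := by rw [← hK]; positivity
  obtain ⟨lam, hlam⟩ : ∃ l : ℝ, min 2 π1 / (1 + π2 + π3) = l := ⟨_, rfl⟩
  have hlampos : 0 < lam := by
    rw [← hlam]; exact div_pos (lt_min two_pos hπ1) (by linarith)
  -- the Lyapunov function and its derivative
  set V : ℝ → ℝ := fun t => (L1 t + L2 t - σ) ^ 2 + K * (L1 t - L2 t) ^ 2 with hV
  set Vd : ℝ → ℝ := fun t =>
      2 * (L1 t + L2 t - σ) * (F1 π0 π1 π2 π3 (L1 t) (L2 t) + F2 π0 π1 π2 π3 (L1 t) (L2 t))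
      + 2 * K * (L1 t - L2 t) * (F1 π0 π1 π2 π3 (L1 t) (L2 t) - F2 π0 π1 π2 π3 (L1 t) (L2 t))
    with hVd
  have hVderiv : ∀ t : ℝ, 0 ≤ t → HasDerivAt V (Vd t) t := by
    intro t ht
    have h1 : HasDerivAt (fun s => (L1 s + L2 s - σ) ^ 2)
        (2 * (L1 t + L2 t - σ)
          * (F1 π0 π1 π2 π3 (L1 t) (L2 t) + F2 π0 π1 π2 π3 (L1 t) (L2 t))) t := by
      have := (((hd1 t ht).fun_add (hd2 t ht)).sub_const σ).fun_pow 2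
      refine this.congr_deriv ?_
      push_cast
      ring
    have h2 : HasDerivAt (fun s => K * (L1 s - L2 s) ^ 2)
        (2 * K * (L1 t - L2 t)
          * (F1 π0 π1 π2 π3 (L1 t) (L2 t) - F2 π0 π1 π2 π3 (L1 t) (L2 t))) t := by
      have := (((hd1 t ht).fun_sub (hd2 t ht)).fun_pow 2).const_mul K
      refine this.congr_deriv ?_
      push_cast
      ring
    exact h1.add h2
  have hVnonneg : ∀ t : ℝ, 0 ≤ V t := by
    intro t
    have : 0 ≤ K * (L1 t - L2 t) ^ 2 := by positivity
    have h2 : 0 ≤ (L1 t + L2 t - σ) ^ 2 := sq_nonneg _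
    simp only [hV]
    linarith
  have hVd_le : ∀ t : ℝ, 0 ≤ t → Vd t ≤ -lam * V t := by
    intro t ht
    obtain ⟨ha, hb, hc⟩ := hΩ t ht
    have := key_ineq π0 π1 π2 π3 σ hπ0 hπ1 hπ2 hπ3 hσeq hσ0 hσ1
      (L1 t) (L2 t) ha hb hc
    rw [hK, hlam] at this
    simpa [hVd, hV, neg_mul] using this
  -- the auxiliary function W = V * exp (lam t) is antitone on [0, ∞)
  set W : ℝ → ℝ := fun t => V t * Real.exp (lam * t) with hW
  have hWderiv : ∀ t : ℝ, 0 ≤ t →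
      HasDerivAt W ((Vd t + lam * V t) * Real.exp (lam * t)) t := by
    intro t ht
    have he : HasDerivAt (fun s : ℝ => Real.exp (lam * s)) (Real.exp (lam * t) * lam) t := by
      simpa using (((hasDerivAt_id t).const_mul lam).exp)
    have := (hVderiv t ht).fun_mul he
    refine this.congr_deriv ?_
    ring
  have hanti : AntitoneOn W (Set.Ici (0:ℝ)) := by
    apply antitoneOn_of_hasDerivWithinAt_nonpos (convex_Ici 0)
      (f' := fun t => (Vd t + lam * V t) * Real.exp (lam * t))
    · intro t ht
      exact (hWderiv t ht).continuousAt.continuousWithinAt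
    · intro t ht
      rw [interior_Ici] at ht
      exact (hWderiv t (le_of_lt ht)).hasDerivWithinAt
    · intro t ht
      rw [interior_Ici] at ht
      have h1 : Vd t + lam * V t ≤ 0 := by
        have := hVd_le t (le_of_lt ht)
        linarith
      exact mul_nonpos_of_nonpos_of_nonneg h1 (Real.exp_pos _).le
  -- exponential decay of V
  have hVbound : ∀ t : ℝ, 0 ≤ t → V t ≤ V 0 * Real.exp (-(lam * t)) := by
    intro t ht
    have h1 : W t ≤ W 0 := hanti (Set.self_mem_Ici) ht ht
    have h2 : W 0 = V 0 := by simp [hW]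
    have h3 : V t = W t * Real.exp (-(lam * t)) := by
      simp only [hW]
      rw [mul_assoc, ← Real.exp_add]
      simp
    rw [h3]
    calc W t * Real.exp (-(lam * t)) ≤ W 0 * Real.exp (-(lam * t)) :=
          mul_le_mul_of_nonneg_right h1 (Real.exp_pos (-(lam * t))).le
      _ = V 0 * Real.exp (-(lam * t)) := by rw [h2]
  -- V tends to 0
  have hVtend : Filter.Tendsto V Filter.atTop (nhds 0) := by
    have hupper : Filter.Tendsto (fun t : ℝ => V 0 * Real.exp (-(lam * t)))
        Filter.atTop (nhds 0) := by
      have h1 : Filter.Tendsto (fun t : ℝ => lam * t) Filter.atTop Filter.atTop :=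
        Filter.Tendsto.const_mul_atTop hlampos Filter.tendsto_id
      have h2 : Filter.Tendsto (fun t : ℝ => Real.exp (-(lam * t))) Filter.atTop (nhds 0) :=
        Real.tendsto_exp_atBot.comp (Filter.tendsto_neg_atBot_iff.mpr h1)
      simpa using h2.const_mul (V 0)
    refine tendsto_of_tendsto_of_tendsto_of_le_of_le' tendsto_const_nhds hupper
      (Filter.Eventually.of_forall hVnonneg) ?_
    filter_upwards [Filter.eventually_ge_atTop (0:ℝ)] with t ht
    exact hVbound t ht
  -- convergence of the sum and difference
  have hsum2 : Filter.Tendsto (fun t => (L1 t + L2 t - σ) ^ 2) Filter.atTop (nhds 0) := by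
    refine tendsto_of_tendsto_of_tendsto_of_le_of_le tendsto_const_nhds hVtend ?_ ?_
    · intro t; exact sq_nonneg _
    · intro t
      have : 0 ≤ K * (L1 t - L2 t) ^ 2 := by positivity
      simp only [hV]; linarith
  have hdiff2 : Filter.Tendsto (fun t => (L1 t - L2 t) ^ 2) Filter.atTop (nhds 0) := by
    have h1 : Filter.Tendsto (fun t => V t / K) Filter.atTop (nhds 0) := by
      simpa using hVtend.div_const K
    refine tendsto_of_tendsto_of_tendsto_of_le_of_le tendsto_const_nhds h1 ?_ ?_
    · intro t; exact sq_nonneg _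
    · intro t
      rw [le_div_iff₀ hKpos]
      have : 0 ≤ (L1 t + L2 t - σ) ^ 2 := sq_nonneg _
      simp only [hV]; nlinarith
  have habs : ∀ f : ℝ → ℝ, Filter.Tendsto (fun t => (f t) ^ 2) Filter.atTop (nhds 0) →
      Filter.Tendsto f Filter.atTop (nhds 0) := by
    intro f h
    have habs : Filter.Tendsto (fun t => |f t|) Filter.atTop (nhds 0) := by
      have := h.sqrt
      simpa [Real.sqrt_sq_eq_abs] using this
    exact tendsto_zero_iff_abs_tendsto_zero f |>.mpr habs
  have hsum : Filter.Tendsto (fun t => L1 t + L2 t) Filter.atTop (nhds σ) := by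
    have := habs _ hsum2
    have h2 := this.add_const σ
    simpa using h2
  have hdiff : Filter.Tendsto (fun t => L1 t - L2 t) Filter.atTop (nhds 0) := habs _ hdiff2
  have hLss : Lss π0 π1 π2 π3 = σ / 2 := by rw [← hσdef]; ring
  have hL1 : Filter.Tendsto L1 Filter.atTop (nhds (Lss π0 π1 π2 π3)) := by
    have h := (hsum.add hdiff).div_const 2
    rw [hLss]
    have heq : (fun t => (L1 t + L2 t + (L1 t - L2 t)) / 2) = L1 := by
      funext t; ring
    rw [heq] at h
    simpa using h
  have hL2 : Filter.Tendsto L2 Filter.atTop (nhds (Lss π0 π1 π2 π3)) := by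
    have h := (hsum.sub hdiff).div_const 2
    rw [hLss]
    have heq : (fun t => (L1 t + L2 t - (L1 t - L2 t)) / 2) = L2 := by
      funext t; ring
    rw [heq] at h
    simpa using h
  exact hL1.prodMk_nhds hL2
end
end
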